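/- For every ε > 0, the function f_ε : ℝ → ℝ defined by f_ε(x) = x for x > ε and f_ε(x) = x²/(2ε) + ε/2 for x ≤ ε is convex and differentiable on ℝ, its minimum value is ε/2 (attained at x = 0), and it satisfies f_ε'(ε) = 1 while f_ε(ε) − min f_ε = ε/2. In particular, the optimality gap f_ε(ε) − min f_ε tends to 0 as ε → 0 while the derivative at the same point remains equal to 1, so the optimality gap cannot bound the Karush–Kuhn–Tucker error. -/

import Mathlib

open Filter Topology

noncomputable section

/-- The counterexample function `f_ε(x) = x` for `x > ε` and `x²/(2ε) + ε/2` for `x ≤ ε`. -/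
def fEps (ε x : ℝ) : ℝ := if ε < x then x else x ^ 2 / (2 * ε) + ε / 2

lemma fEps_eq (ε : ℝ) (hε : 0 < ε) :
    fEps ε = fun x => x ^ 2 / (2 * ε) + ε / 2 - (max (x - ε) 0) ^ 2 / (2 * ε) := by
  funext x
  unfold fEps
  split_ifs with h
  · rw [max_eq_left (by linarith)]
    field_simp
    ring
  · rw [max_eq_right (by linarith)]
    simp

lemma hasDerivAt_sq_max (y : ℝ) :
    HasDerivAt (fun z : ℝ => (max z 0) ^ 2) (2 * max y 0) y := by
  rcases lt_trichotomy y 0 with hy | hy | hy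
  · have : HasDerivAt (fun _ : ℝ => (0 : ℝ)) 0 y := hasDerivAt_const y 0
    rw [max_eq_right hy.le, mul_zero]
    refine this.congr_of_eventuallyEq ?_
    filter_upwards [eventually_lt_nhds hy] with z hz
    rw [max_eq_right hz.le]; norm_num
  · subst hy
    rw [max_self, mul_zero]
    rw [hasDerivAt_iff_tendsto]
    have h0 : ∀ x : ℝ, |x - 0|⁻¹ * ‖(max x 0) ^ 2 - (max (0:ℝ) 0) ^ 2 - (x - 0) • (0:ℝ)‖
        ≤ |x| := by
      intro x
      rcases le_or_gt x 0 with hx | hx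
      · rw [max_eq_right hx]
        simp [abs_nonneg]
      · rw [max_eq_left hx.le]
        simp only [sub_zero, max_self, smul_zero, Real.norm_eq_abs]
        rw [show x ^ 2 - 0 ^ 2 = x ^ 2 by ring, abs_of_nonneg (sq_nonneg x),
          abs_of_pos hx, inv_mul_le_iff₀ hx]
        nlinarith
    refine squeeze_zero (fun x => by positivity) h0 ?_
    have : Tendsto (fun x : ℝ => |x|) (𝓝 0) (𝓝 |0|) :=
      (continuous_abs.tendsto 0)
    simpa using this
  · have : HasDerivAt (fun z : ℝ => z ^ 2) (2 * y) y := by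
      simpa using hasDerivAt_pow 2 y
    rw [max_eq_left hy.le]
    refine this.congr_of_eventuallyEq ?_
    filter_upwards [eventually_gt_nhds hy] with z hz
    rw [max_eq_left hz.le]

lemma fEps_hasDerivAt (ε : ℝ) (hε : 0 < ε) (x : ℝ) :
    HasDerivAt (fEps ε) (min (x / ε) 1) x := by
  rw [fEps_eq ε hε]
  have h1 : HasDerivAt (fun z : ℝ => z ^ 2 / (2 * ε) + ε / 2) (2 * x / (2 * ε)) x := by
    have := (hasDerivAt_pow 2 x).div_const (2 * ε)
    simpa using this.add_const (ε / 2)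
  have h2 : HasDerivAt (fun z : ℝ => (max (z - ε) 0) ^ 2 / (2 * ε))
      (2 * max (x - ε) 0 * 1 / (2 * ε)) x := by
    have hin : HasDerivAt (fun z : ℝ => z - ε) 1 x := (hasDerivAt_id x).sub_const ε
    exact ((hasDerivAt_sq_max (x - ε)).comp x hin).div_const (2 * ε)
  have := h1.sub h2
  refine HasDerivAt.congr_deriv this ?_
  rcases le_or_gt x ε with h | h
  · rw [max_eq_right (by linarith), min_eq_left ((div_le_one hε).2 h)]
    field_simp
    ring
  · rw [max_eq_left (by linarith), min_eq_right ((one_le_div hε).2 h.le)]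
    field_simp
    ring

/-- counterexample: the optimality gap cannot bound the KKT error.
For every `ε > 0`, `f_ε` is convex and differentiable on `ℝ`, its minimum value is `ε/2`
(attained at `x = 0`), `f_ε'(ε) = 1` and `f_ε(ε) − min f_ε = ε/2`.  In particular, the
optimality gap `f_ε(ε) − min f_ε` tends to `0` as `ε → 0⁺` while the derivative at that
point is always `1`. -/
theorem optimality_gap_cannot_bound_KKT :
    (∀ ε : ℝ, 0 < ε →
      ConvexOn ℝ Set.univ (fEps ε) ∧
      Differentiable ℝ (fEps ε) ∧
      (∀ x : ℝ, fEps ε 0 ≤ fEps ε x) ∧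
      fEps ε 0 = ε / 2 ∧
      deriv (fEps ε) ε = 1 ∧
      fEps ε ε - fEps ε 0 = ε / 2) ∧
    Tendsto (fun ε : ℝ => fEps ε ε - fEps ε 0) (𝓝[>] 0) (𝓝 0) := by
  have key : ∀ ε : ℝ, 0 < ε → fEps ε 0 = ε / 2 ∧ fEps ε ε = ε := by
    intro ε hε
    constructor
    · unfold fEps; rw [if_neg (by linarith)]; norm_num
    · unfold fEps; rw [if_neg (lt_irrefl ε)]; field_simp; ring
  constructor
  · intro ε hε
    have hdiff : Differentiable ℝ (fEps ε) :=
      fun x => (fEps_hasDerivAt ε hε x).differentiableAt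
    have hderiv : ∀ x, deriv (fEps ε) x = min (x / ε) 1 :=
      fun x => (fEps_hasDerivAt ε hε x).deriv
    refine ⟨?_, hdiff, ?_, (key ε hε).1, ?_, ?_⟩
    · apply Monotone.convexOn_univ_of_deriv hdiff
      intro a b hab
      rw [hderiv a, hderiv b]
      exact min_le_min (div_le_div_of_nonneg_right hab hε.le) le_rfl
    · intro x
      rw [(key ε hε).1]
      unfold fEps
      split_ifs with h
      · linarith
      · have : 0 ≤ x ^ 2 / (2 * ε) := by positivity
        linarith
    · rw [hderiv ε, div_self hε.ne', min_self]
    · rw [(key ε hε).1, (key ε hε).2]; ring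
  · have heq : ∀ᶠ ε : ℝ in 𝓝[>] 0, fEps ε ε - fEps ε 0 = ε / 2 := by
      filter_upwards [self_mem_nhdsWithin] with ε hε
      rw [(key ε hε).1, (key ε hε).2]; ring
    refine Tendsto.congr' (heq.mono fun ε h => h.symm) ?_
    have : Tendsto (fun ε : ℝ => ε / 2) (𝓝 (0:ℝ)) (𝓝 (0/2)) :=
      (tendsto_id.div_const 2)
    simpa using this.mono_left nhdsWithin_le_nhds
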